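/- For every k ≥ 0 there exists an unsatisfiable linear k-CNF formula. Moreover, one can construct a sequence F_k with |F_0| = 1 (the formula consisting of the empty clause) and |F_{k+1}| = |F_k| · 2^{|F_k|}. -/

import Mathlib

abbrev Var := ℕ
abbrev Lit := Var × Bool
abbrev Clause := Finset Lit
abbrev CNF := Finset Clause

/-- A clause is valid if it does not contain a variable together with its negation. -/
def Clause.valid (C : Clause) : Prop := ∀ x : Var, ¬(((x, true) ∈ C) ∧ ((x, false) ∈ C))

/-- The set of variables of a clause. -/
def vbl (C : Clause) : Finset Var := C.image Prod.fst

/-- A `k`-CNF formula: every clause is valid and has exactly `k` literals. -/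
def IsKCNF (k : ℕ) (F : CNF) : Prop := ∀ C ∈ F, Clause.valid C ∧ C.card = k

/-- A CNF formula is linear if any two distinct clauses share at most one variable. -/
def LinearCNF (F : CNF) : Prop := ∀ C ∈ F, ∀ D ∈ F, C ≠ D → (vbl C ∩ vbl D).card ≤ 1

/-- A CNF formula is weakly linear if any two distinct clauses share at most one literal. -/
def WeaklyLinear (F : CNF) : Prop := ∀ C ∈ F, ∀ D ∈ F, C ≠ D → (C ∩ D).card ≤ 1

/-- An assignment satisfies a formula if every clause contains a true literal. -/
def Satisfies (α : Var → Bool) (F : CNF) : Prop := ∀ C ∈ F, ∃ l ∈ C, α l.1 = l.2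

def Unsat (F : CNF) : Prop := ¬ ∃ α, Satisfies α F

namespace Stmt10Aux

/-- Rename literals of the copy with code `c`. -/
def ren (c : ℕ) : Lit → Lit := fun l => (Nat.pair (c + 1) l.1, l.2)

lemma ren_injective (c : ℕ) : Function.Injective (ren c) := by
  intro a b h
  simp only [ren, Prod.mk.injEq, Nat.pair_eq_pair] at h
  exact Prod.ext h.1.2 h.2

/-- Injective code of an assignment on `Fin m`. -/
noncomputable def code {m : ℕ} (α : Fin m → Bool) : ℕ :=
  ((Fintype.equivFin (Fin m → Bool)) α : ℕ)

lemma code_injective {m : ℕ} : Function.Injective (code (m := m)) := by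
  intro a b h
  exact (Fintype.equivFin (Fin m → Bool)).injective (Fin.val_injective h)

/-- The fresh literal added to the clause indexed by `C` in the copy `α`. -/
noncomputable def fresh (G : CNF) (α : Fin G.card → Bool) (C : {C // C ∈ G}) : Lit :=
  (Nat.pair 0 (G.equivFin C : ℕ), α (G.equivFin C))

/-- The extended clause. -/
noncomputable def ext (G : CNF) (α : Fin G.card → Bool) (C : {C // C ∈ G}) : Clause :=
  C.1.image (ren (code α)) ∪ {fresh G α C}

noncomputable def step (G : CNF) : CNF :=
  Finset.univ.biUnion (fun α : Fin G.card → Bool => G.attach.image (ext G α))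

lemma mem_ext {G : CNF} {α : Fin G.card → Bool} {C : {C // C ∈ G}} {l : Lit} :
    l ∈ ext G α C ↔ (∃ a ∈ C.1, ren (code α) a = l) ∨ l = fresh G α C := by
  simp [ext, or_comm]

lemma fresh_not_mem_image {G : CNF} {α β : Fin G.card → Bool} {C D : {C // C ∈ G}} :
    fresh G α C ∉ D.1.image (ren (code β)) := by
  intro h
  rcases Finset.mem_image.1 h with ⟨a, _, ha⟩
  have := congrArg Prod.fst ha
  simp only [ren, fresh] at this
  have := (Nat.pair_eq_pair.1 this).1
  omega

lemma card_ext {G : CNF} {α : Fin G.card → Bool} {C : {C // C ∈ G}} :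
    (ext G α C).card = C.1.card + 1 := by
  rw [ext, Finset.card_union_of_disjoint (Finset.disjoint_singleton_right.2 fresh_not_mem_image),
    Finset.card_image_of_injective _ (ren_injective _), Finset.card_singleton]

lemma ext_eq_basic {G : CNF} {α β : Fin G.card → Bool} {C D : {C // C ∈ G}}
    (h : ext G α C = ext G β D) : C = D ∧ α (G.equivFin C) = β (G.equivFin C) := by
  have h1 : fresh G α C ∈ ext G β D := h ▸ (by simp [ext])
  rcases mem_ext.1 h1 with ⟨a, _, ha⟩ | heq
  · exfalso
    exact fresh_not_mem_image (Finset.mem_image.2 ⟨a, ‹_›, ha⟩)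
  · simp only [fresh, Prod.mk.injEq, Nat.pair_eq_pair] at heq
    have hj : G.equivFin C = G.equivFin D := Fin.val_injective heq.1.2
    have hCD : C = D := G.equivFin.injective hj
    subst hCD
    exact ⟨rfl, heq.2⟩

lemma ext_injective_fixed {G : CNF} (α : Fin G.card → Bool) :
    Function.Injective (ext G α) := fun _ _ h => (ext_eq_basic h).1

lemma ext_eq_full {G : CNF} {k : ℕ} (hG : IsKCNF k G) {α β : Fin G.card → Bool}
    {C D : {C // C ∈ G}} (h : ext G α C = ext G β D) : C = D ∧ α = β := by
  obtain ⟨hCD, hval⟩ := ext_eq_basic h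
  subst hCD
  refine ⟨rfl, ?_⟩
  rcases C.1.eq_empty_or_nonempty with he | ⟨l, hl⟩
  · -- all clauses are empty, so G = {∅} and G.card = 1
    have hk : k = 0 := by
      have := (hG C.1 C.2).2
      rw [he] at this; simpa using this.symm
    have hcard : G.card = 1 := by
      have hsub : G ⊆ {∅} := by
        intro E hE
        have := (hG E hE).2
        rw [hk] at this
        simpa using Finset.card_eq_zero.1 this
      have h1 : G = {∅} := Finset.Subset.antisymm hsub (by
        intro E hE
        simp only [Finset.mem_singleton] at hE
        subst hE
        rw [← he]; exact C.2)
      simp [h1]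
    funext i
    have : i = G.equivFin C := by
      apply Fin.val_injective
      have := i.2
      have := (G.equivFin C).2
      omega
    rw [this]; exact hval
  · -- a nonempty clause forces equal codes
    have h1 : ren (code α) l ∈ ext G β C := h ▸ (mem_ext.2 (Or.inl ⟨l, hl, rfl⟩))
    rcases mem_ext.1 h1 with ⟨a, _, ha⟩ | heq
    · have := congrArg Prod.fst ha
      simp only [ren] at this
      have := (Nat.pair_eq_pair.1 this).1
      exact code_injective (by omega)
    · exfalso
      have := congrArg Prod.fst heq
      simp only [ren, fresh] at this
      have := (Nat.pair_eq_pair.1 this).1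
      omega

lemma mem_step {G : CNF} {D : Clause} :
    D ∈ step G ↔ ∃ α : Fin G.card → Bool, ∃ C : {C // C ∈ G}, ext G α C = D := by
  simp [step]

lemma mem_vbl_ext {G : CNF} {α : Fin G.card → Bool} {C : {C // C ∈ G}} {x : Var} :
    x ∈ vbl (ext G α C) ↔
      (∃ v ∈ vbl C.1, Nat.pair (code α + 1) v = x) ∨ x = Nat.pair 0 (G.equivFin C : ℕ) := by
  simp only [vbl, Finset.mem_image]
  constructor
  · rintro ⟨l, hl, rfl⟩
    rcases mem_ext.1 hl with ⟨a, ha, rfl⟩ | rfl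
    · exact Or.inl ⟨a.1, ⟨a, ha, rfl⟩, rfl⟩
    · exact Or.inr rfl
  · rintro (⟨v, ⟨a, ha, rfl⟩, rfl⟩ | rfl)
    · exact ⟨ren (code α) a, mem_ext.2 (Or.inl ⟨a, ha, rfl⟩), rfl⟩
    · exact ⟨fresh G α C, mem_ext.2 (Or.inr rfl), rfl⟩

lemma valid_ext {G : CNF} {α : Fin G.card → Bool} {C : {C // C ∈ G}}
    (hC : Clause.valid C.1) : Clause.valid (ext G α C) := by
  intro x ⟨ht, hf⟩
  rcases mem_ext.1 ht with ⟨a, ha, hae⟩ | hte <;>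
    rcases mem_ext.1 hf with ⟨b, hb, hbe⟩ | hfe
  · have hxa : Nat.pair (code α + 1) a.1 = x := congrArg Prod.fst hae
    have hxb : Nat.pair (code α + 1) b.1 = x := congrArg Prod.fst hbe
    have hv : a.1 = b.1 := (Nat.pair_eq_pair.1 (hxa.trans hxb.symm)).2
    have ha2 : a.2 = true := congrArg Prod.snd hae
    have hb2 : b.2 = false := congrArg Prod.snd hbe
    have ha' : a = (a.1, true) := Prod.ext rfl ha2
    have hb' : b = (a.1, false) := Prod.ext hv.symm hb2
    exact hC a.1 ⟨ha' ▸ ha, hb' ▸ hb⟩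
  · have h1 : Nat.pair (code α + 1) a.1 = x := congrArg Prod.fst hae
    have h2 : x = Nat.pair 0 (G.equivFin C : ℕ) := congrArg Prod.fst hfe
    have := (Nat.pair_eq_pair.1 (h1.trans h2)).1
    omega
  · have h1 : Nat.pair (code α + 1) b.1 = x := congrArg Prod.fst hbe
    have h2 : x = Nat.pair 0 (G.equivFin C : ℕ) := congrArg Prod.fst hte
    have := (Nat.pair_eq_pair.1 (h1.trans h2)).1
    omega
  · have h1 : true = α (G.equivFin C) := congrArg Prod.snd hte
    have h2 : false = α (G.equivFin C) := congrArg Prod.snd hfe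
    rw [← h2] at h1
    exact Bool.noConfusion h1

lemma isKCNF_step {G : CNF} {k : ℕ} (hG : IsKCNF k G) : IsKCNF (k + 1) (step G) := by
  intro D hD
  obtain ⟨α, C, rfl⟩ := mem_step.1 hD
  exact ⟨valid_ext (hG C.1 C.2).1, by rw [card_ext, (hG C.1 C.2).2]⟩

lemma linear_step {G : CNF} {k : ℕ} (hG : IsKCNF k G) (hL : LinearCNF G) :
    LinearCNF (step G) := by
  intro D1 hD1 D2 hD2 hne
  obtain ⟨α, C1, rfl⟩ := mem_step.1 hD1
  obtain ⟨β, C2, rfl⟩ := mem_step.1 hD2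
  by_cases hab : α = β
  · subst hab
    have hC : C1 ≠ C2 := fun h => hne (by rw [h])
    have hsub : vbl (ext G α C1) ∩ vbl (ext G α C2) ⊆
        (vbl C1.1 ∩ vbl C2.1).image (fun v => Nat.pair (code α + 1) v) := by
      intro x hx
      rw [Finset.mem_inter] at hx
      rcases mem_vbl_ext.1 hx.1 with ⟨v1, hv1, he1⟩ | he1 <;>
        rcases mem_vbl_ext.1 hx.2 with ⟨v2, hv2, he2⟩ | he2
      · have hv : v1 = v2 := (Nat.pair_eq_pair.1 (he1.trans he2.symm)).2
        exact Finset.mem_image.2 ⟨v1, Finset.mem_inter.2 ⟨hv1, hv ▸ hv2⟩, he1⟩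
      · exfalso
        have := (Nat.pair_eq_pair.1 (he1.trans he2)).1
        omega
      · exfalso
        have := (Nat.pair_eq_pair.1 (he2.trans he1)).1
        omega
      · exfalso
        have hj : (G.equivFin C1 : ℕ) = (G.equivFin C2 : ℕ) :=
          (Nat.pair_eq_pair.1 (he1.symm.trans he2)).2
        exact hC (G.equivFin.injective (Fin.val_injective hj))
    calc (vbl (ext G α C1) ∩ vbl (ext G α C2)).card
        ≤ ((vbl C1.1 ∩ vbl C2.1).image (fun v => Nat.pair (code α + 1) v)).card :=
          Finset.card_le_card hsub
      _ ≤ (vbl C1.1 ∩ vbl C2.1).card := Finset.card_image_le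
      _ ≤ 1 := hL C1.1 C1.2 C2.1 C2.2 (fun h => hC (Subtype.ext h))
  · have hcode : code α ≠ code β := fun h => hab (code_injective h)
    have hsub : vbl (ext G α C1) ∩ vbl (ext G β C2) ⊆
        {Nat.pair 0 (G.equivFin C1 : ℕ)} := by
      intro x hx
      rw [Finset.mem_inter] at hx
      rcases mem_vbl_ext.1 hx.1 with ⟨v1, hv1, he1⟩ | he1 <;>
        rcases mem_vbl_ext.1 hx.2 with ⟨v2, hv2, he2⟩ | he2
      · exfalso
        have := (Nat.pair_eq_pair.1 (he1.trans he2.symm)).1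
        omega
      · exfalso
        have := (Nat.pair_eq_pair.1 (he1.trans he2)).1
        omega
      · exact Finset.mem_singleton.2 he1
      · exact Finset.mem_singleton.2 he1
    calc (vbl (ext G α C1) ∩ vbl (ext G β C2)).card
        ≤ ({Nat.pair 0 (G.equivFin C1 : ℕ)} : Finset ℕ).card := Finset.card_le_card hsub
      _ = 1 := Finset.card_singleton _

lemma unsat_step {G : CNF} (hU : Unsat G) : Unsat (step G) := by
  rintro ⟨δ, hδ⟩
  set α : Fin G.card → Bool := fun j => !(δ (Nat.pair 0 (j : ℕ))) with hα
  apply hU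
  refine ⟨fun v => δ (Nat.pair (code α + 1) v), ?_⟩
  intro C hC
  obtain ⟨l, hl, hls⟩ := hδ (ext G α ⟨C, hC⟩) (mem_step.2 ⟨α, ⟨C, hC⟩, rfl⟩)
  rcases mem_ext.1 hl with ⟨a, ha, rfl⟩ | rfl
  · exact ⟨a, ha, hls⟩
  · exfalso
    simp only [fresh, hα] at hls
    simp at hls

lemma card_step {G : CNF} {k : ℕ} (hG : IsKCNF k G) :
    (step G).card = G.card * 2 ^ G.card := by
  rw [step, Finset.card_biUnion]
  · rw [Finset.sum_congr rfl (fun α _ =>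
      (Finset.card_image_of_injective G.attach (ext_injective_fixed α)).trans
        G.card_attach)]
    simp [mul_comm]
  · intro α _ β _ hab
    rw [Function.onFun, Finset.disjoint_left]
    rintro D hD1 hD2
    obtain ⟨C1, _, rfl⟩ := Finset.mem_image.1 hD1
    obtain ⟨C2, _, h⟩ := Finset.mem_image.1 hD2
    exact hab ((ext_eq_full hG h).2).symm

noncomputable def Fseq : ℕ → CNF
  | 0 => {∅}
  | k + 1 => step (Fseq k)

lemma Fseq_props : ∀ k, IsKCNF k (Fseq k) ∧ LinearCNF (Fseq k) ∧ Unsat (Fseq k) := by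
  intro k
  induction k with
  | zero =>
    refine ⟨?_, ?_, ?_⟩
    · intro C hC
      simp only [Fseq, Finset.mem_singleton] at hC
      subst hC
      exact ⟨fun x hx => by simp at hx, rfl⟩
    · intro C hC D hD hne
      simp only [Fseq, Finset.mem_singleton] at hC hD
      exact absurd (hC.trans hD.symm) hne
    · rintro ⟨δ, hδ⟩
      obtain ⟨l, hl, -⟩ := hδ ∅ (by simp [Fseq])
      simp at hl
  | succ k ih =>
    exact ⟨isKCNF_step ih.1, linear_step ih.1 ih.2.1, unsat_step ih.2.2⟩

end Stmt10Aux

theorem stmt10 :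
    ∃ F : ℕ → CNF,
      (∀ k, IsKCNF k (F k) ∧ LinearCNF (F k) ∧ Unsat (F k)) ∧
      (F 0).card = 1 ∧
      (∀ k, (F (k + 1)).card = (F k).card * 2 ^ (F k).card) := by
  refine ⟨Stmt10Aux.Fseq, Stmt10Aux.Fseq_props, by simp [Stmt10Aux.Fseq], fun k => ?_⟩
  have : Stmt10Aux.Fseq (k + 1) = Stmt10Aux.step (Stmt10Aux.Fseq k) := rfl
  rw [this]
  exact Stmt10Aux.card_step (Stmt10Aux.Fseq_props k).1
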